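/- arXiv:1211.2561 — 4 statements merged into one kernel-verified Lean document; each statement's English description precedes it below -/
import Mathlib

section
/- Let (K^{p,q}, ∂, ∂̄) be a bounded double complex of finite-dimensional complex vector spaces. Then for every k, the dimension of the k-th total cohomology H^k_d(Tot K) (with d = ∂ + ∂̄) is at most the sum over p+q = k of the dimensions of the first page E_1^{p,q} ≅ H^{p,q}_{∂̄}(K) of the associated spectral sequence; equivalently, ∑_{p+q=k} dim H^{p,q}_{∂̄}(K) ≥ dim H^k_d(Tot K) (Frölicher inequality). -/
open Module Submodule

lemma aux_rank_split {V : Type*} [AddCommGroup V] [Module ℂ V] [FiniteDimensional ℂ V]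
    (f : V →ₗ[ℂ] V) (N : Submodule ℂ V) :
    finrank ℂ N = finrank ℂ (N.map f) + finrank ℂ (N ⊓ LinearMap.ker f : Submodule ℂ V) := by
  have h := LinearMap.finrank_range_add_finrank_ker (f ∘ₗ N.subtype)
  rw [LinearMap.range_comp, Submodule.range_subtype, LinearMap.ker_comp] at h
  have h2 : finrank ℂ (Submodule.comap N.subtype (LinearMap.ker f)) =
      finrank ℂ (N ⊓ LinearMap.ker f : Submodule ℂ V) := by
    have e : (N ⊓ LinearMap.ker f : Submodule ℂ V) =
        Submodule.map N.subtype (Submodule.comap N.subtype (LinearMap.ker f)) := by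
      rw [Submodule.map_comap_subtype, inf_comm]
    rw [e]
    exact (Submodule.equivMapOfInjective N.subtype N.injective_subtype _).finrank_eq
  omega

lemma aux_quot_rank {V : Type*} [AddCommGroup V] [Module ℂ V] [FiniteDimensional ℂ V]
    (N M : Submodule ℂ V) (h : M ≤ N) :
    finrank ℂ (N ⧸ Submodule.comap N.subtype M) + finrank ℂ M = finrank ℂ N := by
  have := Submodule.finrank_quotient_add_finrank (Submodule.comap N.subtype M)
  rwa [(Submodule.comapSubtypeEquivOfLe h).finrank_eq] at this

/-- Frölicher inequality for a bounded double complex of finite-dimensional complex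
vector spaces (modeled as an internally graded module `V` with bigrading `K` supported
on a finite set `S`): for every total degree `k`, the dimension of the total (de Rham)
cohomology in degree `k` is at most the sum over `p + q = k` of the dimensions of the
`∂̄`-cohomologies (the first page of the Hodge–Frölicher spectral sequence). -/
theorem stmt5 {V : Type*} [AddCommGroup V] [Module ℂ V] [FiniteDimensional ℂ V]
    (K : ℤ × ℤ → Submodule ℂ V)
    (hinternal : DirectSum.IsInternal K)
    (S : Finset (ℤ × ℤ)) (hbounded : ∀ ij, ij ∉ S → K ij = ⊥)
    (p q : V →ₗ[ℂ] V)
    (hpmap : ∀ i j : ℤ, Submodule.map p (K (i, j)) ≤ K (i + 1, j))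
    (hqmap : ∀ i j : ℤ, Submodule.map q (K (i, j)) ≤ K (i, j + 1))
    (hp : p ∘ₗ p = 0) (hq : q ∘ₗ q = 0) (hpq : p ∘ₗ q + q ∘ₗ p = 0) :
    ∀ k : ℤ,
      Module.finrank ℂ
        ((LinearMap.ker (p + q) ⊓ (⨆ i : ℤ, K (i, k - i)) : Submodule ℂ V) ⧸
          Submodule.comap (LinearMap.ker (p + q) ⊓ (⨆ i : ℤ, K (i, k - i))).subtype
            (Submodule.map (p + q) (⨆ i : ℤ, K (i, k - 1 - i))))
      ≤ ∑ ij ∈ S.filter (fun ij => ij.1 + ij.2 = k),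
          Module.finrank ℂ
            ((LinearMap.ker q ⊓ K ij : Submodule ℂ V) ⧸
              Submodule.comap (LinearMap.ker q ⊓ K ij).subtype
                (Submodule.map q (K (ij.1, ij.2 - 1)))) := by
  classical
  intro k
  set d : V →ₗ[ℂ] V := p + q with hd
  have hdapp : ∀ x, d x = p x + q x := fun x => rfl
  have hd2 : ∀ x, d (d x) = 0 := by
    intro x
    have h1 : p (p x) = 0 := by rw [← LinearMap.comp_apply, hp]; rfl
    have h2 : q (q x) = 0 := by rw [← LinearMap.comp_apply, hq]; rfl
    have h3 : p (q x) + q (p x) = 0 := by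
      have := congrArg (fun f : V →ₗ[ℂ] V => f x) hpq
      simpa using this
    rw [hdapp, hdapp x, map_add, map_add, h1, h2]
    rw [add_zero, zero_add, h3]
  -- projections
  set e : (DirectSum (ℤ × ℤ) fun ij => K ij) ≃ₗ[ℂ] V :=
    LinearEquiv.ofBijective (DirectSum.coeLinearMap K) hinternal with he
  set π : ℤ × ℤ → (V →ₗ[ℂ] V) := fun ij =>
    (K ij).subtype ∘ₗ (DirectSum.component ℂ (ℤ × ℤ) (fun ij => (K ij : Submodule ℂ V)) ij)
      ∘ₗ (e.symm : V →ₗ[ℂ] DirectSum (ℤ × ℤ) fun ij => K ij) with hπ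
  have hπapp : ∀ ij x, π ij x = ((e.symm x) ij : V) := fun ij x => rfl
  have hπmem : ∀ ij x, π ij x ∈ K ij := fun ij x => (e.symm x ij).2
  have hπself : ∀ ij x, x ∈ K ij → π ij x = x := by
    intro ij x hx
    rw [hπapp, hinternal.ofBijective_coeLinearMap_of_mem hx]
  have hπne : ∀ ij c x, c ≠ ij → x ∈ K c → π ij x = 0 := by
    intro ij c x hc hx
    rw [hπapp, hinternal.ofBijective_coeLinearMap_of_mem_ne hc hx]
    rfl
  have hKker : ∀ ij c, c ≠ ij → K c ≤ LinearMap.ker (π ij) :=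
    fun ij c hc x hx => LinearMap.mem_ker.2 (hπne ij c x hc hx)
  have hKle : ∀ (c c' : ℤ × ℤ), c = c' → K c ≤ K c' := fun c c' h => le_of_eq (congrArg K h)
  -- filtration
  set F : ℤ → Submodule ℂ V := fun a => ⨆ i, ⨆ (_ : a ≤ i), K (i, k - i) with hF
  set TT : Submodule ℂ V := ⨆ i : ℤ, K (i, k - 1 - i) with hTT
  set Tk : Submodule ℂ V := ⨆ i : ℤ, K (i, k - i) with hTk
  have hFmono : ∀ a : ℤ, F (a + 1) ≤ F a := by
    intro a
    refine iSup₂_le fun i hi => ?_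
    exact le_iSup₂ (f := fun (i : ℤ) (_ : a ≤ i) => K (i, k - i)) i (by omega)
  have hFsplit : ∀ a : ℤ, F a = K (a, k - a) ⊔ F (a + 1) := by
    intro a
    refine le_antisymm (iSup₂_le fun i hi => ?_)
      (sup_le (le_iSup₂ (f := fun (i : ℤ) (_ : a ≤ i) => K (i, k - i)) a le_rfl) (hFmono a))
    rcases eq_or_lt_of_le hi with h | h
    · exact le_sup_of_le_left (hKle _ _ (by rw [← h]))
    · exact le_sup_of_le_right
        (le_iSup₂ (f := fun (i : ℤ) (_ : a + 1 ≤ i) => K (i, k - i)) i (by omega))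
  have hFker : ∀ a : ℤ, F (a + 1) ≤ LinearMap.ker (π (a, k - a)) := by
    intro a
    refine iSup₂_le fun i hi => hKker _ _ ?_
    intro hcon
    have : i = a := congrArg Prod.fst hcon
    omega
  have hFinf : ∀ a : ℤ, F a ⊓ LinearMap.ker (π (a, k - a)) = F (a + 1) := by
    intro a
    refine le_antisymm ?_ (le_inf (hFmono a) (hFker a))
    rintro x ⟨hxF, hxk⟩
    rw [hFsplit a] at hxF
    obtain ⟨u, hu, v, hv, rfl⟩ := Submodule.mem_sup.mp hxF
    have hπv : π (a, k - a) v = 0 := hFker a hv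
    have hπx : π (a, k - a) (u + v) = u := by
      rw [map_add, hπself _ _ hu, hπv, add_zero]
    have hu0 : u = 0 := by
      rw [← hπx]; exact hxk
    rw [hu0, zero_add]
    exact hv
  -- bounds
  set N : ℕ := S.sup fun ij => ij.1.natAbs with hN
  have hNle : ∀ ij ∈ S, ij.1.natAbs ≤ N := fun ij h => Finset.le_sup (f := fun ij : ℤ × ℤ => ij.1.natAbs) h
  have hKout : ∀ c : ℤ × ℤ, ((N : ℤ) < c.1 ∨ c.1 < -(N : ℤ)) → K c = ⊥ := by
    intro c hc
    apply hbounded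
    intro hmem
    have := hNle c hmem
    omega
  set hi : ℤ := (N : ℤ) + 1 with hhi
  set lo : ℤ := -(N : ℤ) - 1 with hlo
  have hFbot : F hi = ⊥ := by
    rw [eq_bot_iff]
    refine iSup₂_le fun i hiv => ?_
    rw [hKout (i, k - i) (by simp; omega)]
  have hFlo : F lo = Tk := by
    refine le_antisymm (iSup₂_le fun i _ => le_iSup (fun i => K (i, k - i)) i) ?_
    refine iSup_le fun i => ?_
    by_cases h : lo ≤ i
    · exact le_iSup₂ (f := fun (i : ℤ) (_ : lo ≤ i) => K (i, k - i)) i h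
    · rw [hKout (i, k - i) (by simp; omega)]
      exact bot_le
  -- Z and B
  set Z : ℤ → Submodule ℂ V := fun a => LinearMap.ker d ⊓ F a with hZ
  set B : ℤ → Submodule ℂ V := fun a => Submodule.map d TT ⊓ F a with hB
  have hdTT_ker : Submodule.map d TT ≤ LinearMap.ker d := by
    rintro x ⟨y, -, rfl⟩
    exact LinearMap.mem_ker.2 (hd2 y)
  have hdTT_Tk : Submodule.map d TT ≤ Tk := by
    rw [hTT, Submodule.map_iSup]
    refine iSup_le fun i => ?_
    intro x hx
    obtain ⟨y, hy, rfl⟩ := hx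
    rw [hdapp]
    refine add_mem ?_ ?_
    · refine le_iSup (fun i => K (i, k - i)) (i + 1) ?_
      exact hKle _ _ (by rw [Prod.mk.injEq]; omega) (hpmap _ _ ⟨y, hy, rfl⟩)
    · refine le_iSup (fun i => K (i, k - i)) i ?_
      exact hKle _ _ (by rw [Prod.mk.injEq]; omega) (hqmap _ _ ⟨y, hy, rfl⟩)
  -- the key step inequality
  have step : ∀ a : ℤ,
      finrank ℂ (Z a) + finrank ℂ (B (a + 1))
        + finrank ℂ (Submodule.map q (K (a, k - a - 1)))
      ≤ finrank ℂ (B a) + finrank ℂ (Z (a + 1))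
        + finrank ℂ (LinearMap.ker q ⊓ K (a, k - a) : Submodule ℂ V) := by
    intro a
    set πa : V →ₗ[ℂ] V := π (a, k - a) with hπa
    have hZsplit : finrank ℂ (Z a) =
        finrank ℂ ((Z a).map πa) + finrank ℂ (Z (a + 1)) := by
      rw [aux_rank_split πa (Z a)]
      congr 1
      rw [hZ, inf_assoc, hFinf a]
    have hBsplit : finrank ℂ (B a) =
        finrank ℂ ((B a).map πa) + finrank ℂ (B (a + 1)) := by
      rw [aux_rank_split πa (B a)]
      congr 1
      rw [hB, inf_assoc, hFinf a]
    -- image of Z a lands in ker q ⊓ K (a, k - a)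
    have hZmap : (Z a).map πa ≤ LinearMap.ker q ⊓ K (a, k - a) := by
      rintro _ ⟨x, ⟨hxd, hxF⟩, rfl⟩
      rw [hFsplit a] at hxF
      obtain ⟨u, hu, v, hv, rfl⟩ := Submodule.mem_sup.mp hxF
      have hπx : πa (u + v) = u := by
        rw [map_add, hπself _ _ hu, (hFker a hv : πa v = 0), add_zero]
      rw [hπx]
      refine ⟨LinearMap.mem_ker.2 ?_, hu⟩
      -- show q u = 0 by projecting d (u + v) = 0 to bidegree (a, k - a + 1)
      have hdx : d (u + v) = 0 := hxd
      have hpv : p v ∈ LinearMap.ker (π (a, k - a + 1)) := by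
        refine (iSup₂_le fun i hiv => ?_ :
          F (a+1) ≤ Submodule.comap p (LinearMap.ker (π (a, k - a + 1)))) hv
        rw [← Submodule.map_le_iff_le_comap]
        refine le_trans (hpmap _ _) (hKker _ _ ?_)
        intro hc
        have h' : i + 1 = a := congrArg Prod.fst hc
        omega
      have hqv : q v ∈ LinearMap.ker (π (a, k - a + 1)) := by
        refine (iSup₂_le fun i hiv => ?_ :
          F (a+1) ≤ Submodule.comap q (LinearMap.ker (π (a, k - a + 1)))) hv
        rw [← Submodule.map_le_iff_le_comap]
        refine le_trans (hqmap _ _) (hKker _ _ ?_)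
        intro hc
        have h' : i = a := congrArg Prod.fst hc
        omega
      have hpu : π (a, k - a + 1) (p u) = 0 := by
        refine hπne _ (a + 1, k - a) _ ?_ (hpmap _ _ ⟨u, hu, rfl⟩)
        intro hc
        have h' : a + 1 = a := congrArg Prod.fst hc
        omega
      have hqu : π (a, k - a + 1) (q u) = q u :=
        hπself _ _ (hqmap _ _ ⟨u, hu, rfl⟩)
      have h0 : π (a, k - a + 1) (d (u + v)) = q u := by
        simp only [hdapp, map_add]
        rw [hpu, hqu, LinearMap.mem_ker.1 hpv, LinearMap.mem_ker.1 hqv]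
        abel
      rw [hdx, map_zero] at h0
      exact h0.symm
    -- image of B a contains q (K (a, k - a - 1))
    have hBmap : Submodule.map q (K (a, k - a - 1)) ≤ (B a).map πa := by
      rintro _ ⟨x, hx, rfl⟩
      have hpx : p x ∈ K (a + 1, k - (a + 1)) :=
        hKle _ _ (by rw [Prod.mk.injEq]; omega) (hpmap _ _ ⟨x, hx, rfl⟩)
      have hqx : q x ∈ K (a, k - a) :=
        hKle _ _ (by rw [Prod.mk.injEq]; omega) (hqmap _ _ ⟨x, hx, rfl⟩)
      refine ⟨d x, ⟨?_, ?_⟩, ?_⟩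
      · exact Submodule.mem_map_of_mem
          (le_iSup (fun i => K (i, k - 1 - i)) a (hKle _ _ (by rw [Prod.mk.injEq]; omega) hx))
      · rw [hdapp]
        refine add_mem ?_ ?_
        · exact le_iSup₂ (f := fun (i : ℤ) (_ : a ≤ i) => K (i, k - i)) (a + 1) (by omega) hpx
        · exact le_iSup₂ (f := fun (i : ℤ) (_ : a ≤ i) => K (i, k - i)) a le_rfl hqx
      · rw [hdapp, map_add, hπself _ _ hqx,
          hπne _ (a + 1, k - (a + 1)) _ (by intro hc; exact absurd (congrArg Prod.fst hc : a + 1 = a) (by omega)) hpx,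
          zero_add]
    have h1 : finrank ℂ ((Z a).map πa) ≤
        finrank ℂ (LinearMap.ker q ⊓ K (a, k - a) : Submodule ℂ V) :=
      Submodule.finrank_mono hZmap
    have h2 : finrank ℂ (Submodule.map q (K (a, k - a - 1))) ≤ finrank ℂ ((B a).map πa) :=
      Submodule.finrank_mono hBmap
    omega
  -- induction
  set Sk : Finset (ℤ × ℤ) := S.filter (fun ij => ij.1 + ij.2 = k) with hSk
  have hSkfst : ∀ ij ∈ Sk, -(N : ℤ) ≤ ij.1 ∧ ij.1 ≤ (N : ℤ) := by
    intro ij h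
    rw [hSk, Finset.mem_filter] at h
    have := hNle ij h.1
    omega
  have main : ∀ n : ℕ,
      finrank ℂ (Z (hi - n)) +
        ∑ ij ∈ Sk.filter (fun ij => hi - n ≤ ij.1),
          finrank ℂ (Submodule.map q (K (ij.1, ij.2 - 1)))
      ≤ finrank ℂ (B (hi - n)) +
        ∑ ij ∈ Sk.filter (fun ij => hi - n ≤ ij.1),
          finrank ℂ (LinearMap.ker q ⊓ K ij : Submodule ℂ V) := by
    intro n
    induction n with
    | zero =>
      have h0 : hi - ((0 : ℕ) : ℤ) = hi := by push_cast; ring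
      rw [h0]
      have hz : Z hi = ⊥ := by
        show LinearMap.ker d ⊓ F hi = ⊥
        rw [hFbot, inf_bot_eq]
      have hb : B hi = ⊥ := by
        show Submodule.map d TT ⊓ F hi = ⊥
        rw [hFbot, inf_bot_eq]
      have hfil : Sk.filter (fun ij => hi ≤ ij.1) = ∅ := by
        rw [Finset.filter_eq_empty_iff]
        intro ij hij
        have := hSkfst ij hij
        omega
      rw [hz, hb, hfil]
      simp
    | succ n ih =>
      set a : ℤ := hi - (n : ℤ) - 1 with ha
      have hcast : hi - ((n + 1 : ℕ) : ℤ) = a := by rw [ha]; push_cast; ring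
      have hcast2 : hi - ((n : ℕ) : ℤ) = a + 1 := by rw [ha]; ring
      rw [hcast]
      rw [hcast2] at ih
      have hsplit : ∀ f : ℤ × ℤ → ℕ,
          ∑ ij ∈ Sk.filter (fun ij => a ≤ ij.1), f ij
          = ∑ ij ∈ Sk.filter (fun ij => a + 1 ≤ ij.1), f ij
            + ∑ ij ∈ Sk.filter (fun ij => ij.1 = a), f ij := by
        intro f
        rw [← Finset.sum_filter_add_sum_filter_not (Sk.filter (fun ij => a ≤ ij.1))
          (fun ij => a + 1 ≤ ij.1)]
        congr 1
        · congr 1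
          ext ij
          simp only [Finset.mem_filter]
          constructor
          · rintro ⟨⟨h1, h2⟩, h3⟩
            exact ⟨h1, h3⟩
          · rintro ⟨h1, h3⟩
            exact ⟨⟨h1, by omega⟩, h3⟩
        · congr 1
          ext ij
          simp only [Finset.mem_filter]
          constructor
          · rintro ⟨⟨h1, h2⟩, h3⟩
            exact ⟨h1, by omega⟩
          · rintro ⟨h1, h2⟩
            exact ⟨⟨h1, by omega⟩, by omega⟩
      have hsingle : ∀ f : ℤ × ℤ → ℕ,
          ∑ ij ∈ Sk.filter (fun ij => ij.1 = a), f ij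
          = if (a, k - a) ∈ Sk then f (a, k - a) else 0 := by
        intro f
        by_cases hm : (a, k - a) ∈ Sk
        · rw [if_pos hm]
          have hset : Sk.filter (fun ij => ij.1 = a) = {(a, k - a)} := by
            ext ij
            simp only [Finset.mem_filter, Finset.mem_singleton]
            constructor
            · rintro ⟨hmem, h2⟩
              rw [hSk, Finset.mem_filter] at hmem
              have h3 : ij.2 = k - a := by omega
              rw [← Prod.mk.eta (p := ij), h2, h3]
            · rintro rfl
              exact ⟨hm, rfl⟩
          rw [hset, Finset.sum_singleton]
        · rw [if_neg hm]
          have hset : Sk.filter (fun ij => ij.1 = a) = ∅ := by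
            rw [Finset.filter_eq_empty_iff]
            intro ij hij h2
            apply hm
            have hij' := hij
            rw [hSk, Finset.mem_filter] at hij'
            have h3 : ij.2 = k - a := by omega
            have h4 : (a, k - a) = ij := by
              rw [← Prod.mk.eta (p := ij), h2, h3]
            rw [h4]
            exact hij
          rw [hset, Finset.sum_empty]
      have hsingle1 :
          ∑ ij ∈ Sk.filter (fun ij => ij.1 = a),
            finrank ℂ (Submodule.map q (K (ij.1, ij.2 - 1)))
          = if (a, k - a) ∈ Sk then finrank ℂ (Submodule.map q (K (a, k - a - 1))) else 0 :=
        hsingle _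
      have hsingle2 :
          ∑ ij ∈ Sk.filter (fun ij => ij.1 = a),
            finrank ℂ (LinearMap.ker q ⊓ K ij : Submodule ℂ V)
          = if (a, k - a) ∈ Sk
            then finrank ℂ (LinearMap.ker q ⊓ K (a, k - a) : Submodule ℂ V) else 0 :=
        hsingle _
      rw [hsplit, hsplit, hsingle1, hsingle2]
      have hstep := step a
      by_cases hm : (a, k - a) ∈ Sk
      · rw [if_pos hm, if_pos hm]
        omega
      · rw [if_neg hm, if_neg hm]
        have hK0 : K (a, k - a) = ⊥ := by
          apply hbounded
          intro hmem
          apply hm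
          rw [hSk, Finset.mem_filter]
          exact ⟨hmem, by omega⟩
        have hz1 : finrank ℂ (LinearMap.ker q ⊓ K (a, k - a) : Submodule ℂ V) = 0 := by
          rw [hK0, inf_bot_eq, finrank_bot]
        have hz2 : finrank ℂ (Submodule.map q (K (a, k - a - 1))) = 0 := by
          have hle : Submodule.map q (K (a, k - a - 1)) ≤ ⊥ := by
            rw [← hK0]
            exact le_trans (hqmap a (k - a - 1)) (hKle _ _ (by rw [Prod.mk.injEq]; omega))
          rw [le_bot_iff.mp hle, finrank_bot]
        omega
  -- endgame
  have hfin := main (2 * N + 2)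
  have hcast : hi - ((2 * N + 2 : ℕ) : ℤ) = lo := by
    rw [hhi, hlo]; push_cast; ring
  rw [hcast] at hfin
  have hfil : Sk.filter (fun ij => lo ≤ ij.1) = Sk := by
    rw [Finset.filter_eq_self]
    intro ij hij
    have := hSkfst ij hij
    omega
  rw [hfil] at hfin
  have hZlo : Z lo = LinearMap.ker d ⊓ Tk := by
    show LinearMap.ker d ⊓ F lo = _
    rw [hFlo]
  have hBlo : B lo = Submodule.map d TT := by
    show Submodule.map d TT ⊓ F lo = _
    rw [hFlo, inf_eq_left]
    exact hdTT_Tk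
  rw [hZlo, hBlo] at hfin
  have hq1 : finrank ℂ
      ((LinearMap.ker d ⊓ Tk : Submodule ℂ V) ⧸
        Submodule.comap (LinearMap.ker d ⊓ Tk).subtype (Submodule.map d TT))
      + finrank ℂ (Submodule.map d TT) = finrank ℂ (LinearMap.ker d ⊓ Tk : Submodule ℂ V) :=
    aux_quot_rank _ _ (le_inf hdTT_ker hdTT_Tk)
  have hterm : ∀ ij ∈ Sk,
      finrank ℂ
        ((LinearMap.ker q ⊓ K ij : Submodule ℂ V) ⧸
          Submodule.comap (LinearMap.ker q ⊓ K ij).subtype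
            (Submodule.map q (K (ij.1, ij.2 - 1))))
      + finrank ℂ (Submodule.map q (K (ij.1, ij.2 - 1)))
      = finrank ℂ (LinearMap.ker q ⊓ K ij : Submodule ℂ V) := by
    intro ij hij
    apply aux_quot_rank
    refine le_inf ?_ ?_
    · rintro x ⟨y, hy, rfl⟩
      exact LinearMap.mem_ker.2 (by rw [← LinearMap.comp_apply, hq]; rfl)
    · refine le_trans (hqmap ij.1 (ij.2 - 1)) (hKle _ _ ?_)
      rw [show ij.2 - 1 + 1 = ij.2 by omega, Prod.mk.eta]
  have hsum :
      (∑ ij ∈ Sk, finrank ℂ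
        ((LinearMap.ker q ⊓ K ij : Submodule ℂ V) ⧸
          Submodule.comap (LinearMap.ker q ⊓ K ij).subtype
            (Submodule.map q (K (ij.1, ij.2 - 1)))))
      + ∑ ij ∈ Sk, finrank ℂ (Submodule.map q (K (ij.1, ij.2 - 1)))
      = ∑ ij ∈ Sk, finrank ℂ (LinearMap.ker q ⊓ K ij : Submodule ℂ V) := by
    rw [← Finset.sum_add_distrib]
    exact Finset.sum_congr rfl hterm
  omega
end

section
/- Let H be a finite-dimensional complex inner product space with anticommuting differentials ∂, ∂̄ of square zero admitting adjoints ∂*, ∂̄* (i.e., ⟨∂x, y⟩ = ⟨x, ∂*y⟩ and similarly for ∂̄). Define Δ_BC = (∂∂̄)(∂∂̄)* + (∂∂̄)*(∂∂̄) + (∂̄*∂)(∂̄*∂)* + (∂̄*∂)*(∂̄*∂) + ∂̄*∂̄ + ∂*∂. Then x ∈ ker Δ_BC if and only if ∂x = 0, ∂̄x = 0, and (∂∂̄)*x = 0. -/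
/-- The Bott-Chern Laplacian
`Δ_BC = (∂∂̄)(∂∂̄)* + (∂∂̄)*(∂∂̄) + (∂̄*∂)(∂̄*∂)* + (∂̄*∂)*(∂̄*∂) + ∂̄*∂̄ + ∂*∂`,
with `p = ∂`, `q = ∂̄`, `ps = ∂*`, `qs = ∂̄*`. -/
def deltaBC {H : Type*} [AddCommGroup H] [Module ℂ H]
    (p q ps qs : H →ₗ[ℂ] H) : H →ₗ[ℂ] H :=
  (p ∘ₗ q) ∘ₗ (qs ∘ₗ ps) + (qs ∘ₗ ps) ∘ₗ (p ∘ₗ q)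
    + (qs ∘ₗ p) ∘ₗ (ps ∘ₗ q) + (ps ∘ₗ q) ∘ₗ (qs ∘ₗ p)
    + qs ∘ₗ q + ps ∘ₗ p

/-- `x ∈ ker Δ_BC` iff `∂x = 0`, `∂̄x = 0` and `(∂∂̄)* x = 0`. -/
theorem stmt8 {H : Type*} [NormedAddCommGroup H] [InnerProductSpace ℂ H]
    [FiniteDimensional ℂ H]
    (p q ps qs : H →ₗ[ℂ] H)
    (hp : p ∘ₗ p = 0) (hq : q ∘ₗ q = 0) (hpq : p ∘ₗ q + q ∘ₗ p = 0)
    (hps : ∀ x y : H, (inner ℂ (p x) y : ℂ) = inner ℂ x (ps y))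
    (hqs : ∀ x y : H, (inner ℂ (q x) y : ℂ) = inner ℂ x (qs y)) :
    ∀ x : H, deltaBC p q ps qs x = 0 ↔ (p x = 0 ∧ q x = 0 ∧ qs (ps x) = 0) := by
  have hps' : ∀ a b : H, (inner ℂ (ps a) b : ℂ) = inner ℂ a (p b) := by
    intro a b
    rw [← inner_conj_symm, ← hps, inner_conj_symm]
  have hqs' : ∀ a b : H, (inner ℂ (qs a) b : ℂ) = inner ℂ a (q b) := by
    intro a b
    rw [← inner_conj_symm, ← hqs, inner_conj_symm]
  intro x
  constructor
  · intro h
    have h0 : (inner ℂ (deltaBC p q ps qs x) x : ℂ) = 0 := by rw [h]; simp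
    have e : (inner ℂ (deltaBC p q ps qs x) x : ℂ) =
        (‖qs (ps x)‖^2 + ‖p (q x)‖^2 + ‖ps (q x)‖^2 + ‖qs (p x)‖^2
          + ‖q x‖^2 + ‖p x‖^2 : ℝ) := by
      have t1 : (inner ℂ (p (q (qs (ps x)))) x : ℂ) = inner ℂ (qs (ps x)) (qs (ps x)) := by
        rw [hps, hqs]
      have t2 : (inner ℂ (qs (ps (p (q x)))) x : ℂ) = inner ℂ (p (q x)) (p (q x)) := by
        rw [hqs', hps']
      have t3 : (inner ℂ (qs (p (ps (q x)))) x : ℂ) = inner ℂ (ps (q x)) (ps (q x)) := by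
        rw [hqs', hps]
      have t4 : (inner ℂ (ps (q (qs (p x)))) x : ℂ) = inner ℂ (qs (p x)) (qs (p x)) := by
        rw [hps', hqs]
      have t5 : (inner ℂ (qs (q x)) x : ℂ) = inner ℂ (q x) (q x) := by rw [hqs']
      have t6 : (inner ℂ (ps (p x)) x : ℂ) = inner ℂ (p x) (p x) := by rw [hps']
      simp only [deltaBC, LinearMap.add_apply, LinearMap.comp_apply, inner_add_left,
        t1, t2, t3, t4, t5, t6, inner_self_eq_norm_sq_to_K]
      norm_cast
    rw [h0] at e
    have e' : (0 : ℝ) = ‖qs (ps x)‖^2 + ‖p (q x)‖^2 + ‖ps (q x)‖^2 + ‖qs (p x)‖^2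
          + ‖q x‖^2 + ‖p x‖^2 := by exact_mod_cast e
    have n1 := sq_nonneg ‖qs (ps x)‖
    have n2 := sq_nonneg ‖p (q x)‖
    have n3 := sq_nonneg ‖ps (q x)‖
    have n4 := sq_nonneg ‖qs (p x)‖
    have n5 := sq_nonneg ‖q x‖
    have n6 := sq_nonneg ‖p x‖
    refine ⟨?_, ?_, ?_⟩
    · have : ‖p x‖^2 = 0 := by linarith
      simpa [pow_eq_zero_iff] using this
    · have : ‖q x‖^2 = 0 := by linarith
      simpa [pow_eq_zero_iff] using this
    · have : ‖qs (ps x)‖^2 = 0 := by linarith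
      simpa [pow_eq_zero_iff] using this
  · rintro ⟨h1, h2, h3⟩
    simp [deltaBC, LinearMap.add_apply, LinearMap.comp_apply, h1, h2, h3]
end

section
/- Let H be a finite-dimensional complex inner product space with anticommuting square-zero operators ∂, ∂̄ and adjoints ∂*, ∂̄*. Then H admits the orthogonal decomposition H = ker Δ_BC ⊕ im(∂∂̄) ⊕ (im ∂* + im ∂̄*), where Δ_BC is the Bott-Chern Laplacian; consequently the natural map ker Δ_BC → (ker ∂ ∩ ker ∂̄)/im ∂∂̄ is a linear isomorphism. -/
/-- Orthogonal decomposition `H = ker Δ_BC ⊕ im ∂∂̄ ⊕ (im ∂* + im ∂̄*)`, and the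
resulting isomorphism between `Δ_BC`-harmonic elements and Bott-Chern cohomology
`(ker ∂ ∩ ker ∂̄)/im ∂∂̄`. -/
theorem stmt10 {H : Type*} [NormedAddCommGroup H] [InnerProductSpace ℂ H]
    [FiniteDimensional ℂ H]
    (p q ps qs : H →ₗ[ℂ] H)
    (hp : p ∘ₗ p = 0) (hq : q ∘ₗ q = 0) (hpq : p ∘ₗ q + q ∘ₗ p = 0)
    (hps : ∀ x y : H, (inner ℂ (p x) y : ℂ) = inner ℂ x (ps y))
    (hqs : ∀ x y : H, (inner ℂ (q x) y : ℂ) = inner ℂ x (qs y)) :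
    (∀ v : H, ∃ a ∈ LinearMap.ker (deltaBC p q ps qs),
      ∃ b ∈ LinearMap.range (p ∘ₗ q),
        ∃ c ∈ LinearMap.range ps ⊔ LinearMap.range qs, v = a + b + c) ∧
    (∀ a ∈ LinearMap.ker (deltaBC p q ps qs), ∀ b ∈ LinearMap.range (p ∘ₗ q),
      (inner ℂ a b : ℂ) = 0) ∧
    (∀ a ∈ LinearMap.ker (deltaBC p q ps qs),
      ∀ c ∈ LinearMap.range ps ⊔ LinearMap.range qs, (inner ℂ a c : ℂ) = 0) ∧
    (∀ b ∈ LinearMap.range (p ∘ₗ q),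
      ∀ c ∈ LinearMap.range ps ⊔ LinearMap.range qs, (inner ℂ b c : ℂ) = 0) ∧
    Nonempty ((LinearMap.ker (deltaBC p q ps qs) : Submodule ℂ H) ≃ₗ[ℂ]
      (LinearMap.ker p ⊓ LinearMap.ker q : Submodule ℂ H) ⧸
        Submodule.comap (LinearMap.ker p ⊓ LinearMap.ker q).subtype
          (LinearMap.range (p ∘ₗ q))) := by
  -- adjoints with flipped slots
  have hps' : ∀ u v : H, (inner ℂ (ps u) v : ℂ) = inner ℂ u (p v) := by
    intro u v
    rw [← inner_conj_symm (ps u) v, ← hps, inner_conj_symm]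
  have hqs' : ∀ u v : H, (inner ℂ (qs u) v : ℂ) = inner ℂ u (q v) := by
    intro u v
    rw [← inner_conj_symm (qs u) v, ← hqs, inner_conj_symm]
  have hpp0 : ∀ x : H, p (p x) = 0 := fun x => by
    have := LinearMap.ext_iff.mp hp x; simpa using this
  have hqq0 : ∀ x : H, q (q x) = 0 := fun x => by
    have := LinearMap.ext_iff.mp hq x; simpa using this
  have hqp : ∀ x : H, q (p x) = - p (q x) := fun x => by
    have := LinearMap.ext_iff.mp hpq x
    simp only [LinearMap.add_apply, LinearMap.comp_apply, LinearMap.zero_apply] at this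
    exact eq_neg_of_add_eq_zero_right this
  -- kernel characterization
  have hker : ∀ x : H, deltaBC p q ps qs x = 0 ↔
      p x = 0 ∧ q x = 0 ∧ qs (ps x) = 0 := by
    intro x
    constructor
    · intro hx
      have hΔ : (inner ℂ (deltaBC p q ps qs x) x : ℂ) = 0 := by
        rw [hx, inner_zero_left]
      have expand : (inner ℂ (deltaBC p q ps qs x) x : ℂ) =
          inner ℂ (qs (ps x)) (qs (ps x)) + inner ℂ (p (q x)) (p (q x))
          + inner ℂ (ps (q x)) (ps (q x)) + inner ℂ (qs (p x)) (qs (p x))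
          + inner ℂ (q x) (q x) + inner ℂ (p x) (p x) := by
        have t1 : (inner ℂ (p (q (qs (ps x)))) x : ℂ)
            = inner ℂ (qs (ps x)) (qs (ps x)) := by rw [hps, hqs]
        have t2 : (inner ℂ (qs (ps (p (q x)))) x : ℂ)
            = inner ℂ (p (q x)) (p (q x)) := by rw [hqs', hps']
        have t3 : (inner ℂ (qs (p (ps (q x)))) x : ℂ)
            = inner ℂ (ps (q x)) (ps (q x)) := by rw [hqs', hps]
        have t4 : (inner ℂ (ps (q (qs (p x)))) x : ℂ)
            = inner ℂ (qs (p x)) (qs (p x)) := by rw [hps', hqs]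
        have t5 : (inner ℂ (qs (q x)) x : ℂ) = inner ℂ (q x) (q x) := by rw [hqs']
        have t6 : (inner ℂ (ps (p x)) x : ℂ) = inner ℂ (p x) (p x) := by rw [hps']
        simp only [deltaBC, LinearMap.add_apply, LinearMap.comp_apply]
        rw [inner_add_left, inner_add_left, inner_add_left, inner_add_left,
          inner_add_left, t1, t2, t3, t4, t5, t6]
      rw [hΔ] at expand
      rw [inner_self_eq_norm_sq_to_K, inner_self_eq_norm_sq_to_K,
        inner_self_eq_norm_sq_to_K, inner_self_eq_norm_sq_to_K,
        inner_self_eq_norm_sq_to_K, inner_self_eq_norm_sq_to_K] at expand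
      norm_cast at expand
      have hreal : (0:ℝ) = ‖qs (ps x)‖ ^ 2 + ‖p (q x)‖ ^ 2 + ‖ps (q x)‖ ^ 2
          + ‖qs (p x)‖ ^ 2 + ‖q x‖ ^ 2 + ‖p x‖ ^ 2 :=
        (Complex.ofReal_eq_zero.mp expand.symm).symm
      have n1 : (0:ℝ) ≤ ‖qs (ps x)‖ ^ 2 := sq_nonneg _
      have n2 : (0:ℝ) ≤ ‖p (q x)‖ ^ 2 := sq_nonneg _
      have n3 : (0:ℝ) ≤ ‖ps (q x)‖ ^ 2 := sq_nonneg _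
      have n4 : (0:ℝ) ≤ ‖qs (p x)‖ ^ 2 := sq_nonneg _
      have n5 : (0:ℝ) ≤ ‖q x‖ ^ 2 := sq_nonneg _
      have n6 : (0:ℝ) ≤ ‖p x‖ ^ 2 := sq_nonneg _
      have e5 : ‖p x‖ ^ 2 = 0 := by linarith
      have e6 : ‖q x‖ ^ 2 = 0 := by linarith
      have e1 : ‖qs (ps x)‖ ^ 2 = 0 := by linarith
      refine ⟨?_, ?_, ?_⟩
      · simpa using (pow_eq_zero_iff (two_ne_zero)).mp e5
      · simpa using (pow_eq_zero_iff (two_ne_zero)).mp e6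
      · simpa using (pow_eq_zero_iff (two_ne_zero)).mp e1
    · rintro ⟨h1, h2, h3⟩
      simp [deltaBC, LinearMap.add_apply, LinearMap.comp_apply, h1, h2, h3,
        map_zero]
  -- the big subspace
  set W : Submodule ℂ H := LinearMap.range (p ∘ₗ q) ⊔
      (LinearMap.range ps ⊔ LinearMap.range qs) with hW
  have hWperpK : ∀ x : H, x ∈ Wᗮ → x ∈ LinearMap.ker (deltaBC p q ps qs) := by
    intro x hx
    rw [Submodule.mem_orthogonal] at hx
    have hpx : p x = 0 := by
      have h := hx (ps (p x))
        (Submodule.mem_sup_right (Submodule.mem_sup_left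
          (LinearMap.mem_range_self ps (p x))))
      rw [hps'] at h
      exact inner_self_eq_zero.mp h
    have hqx : q x = 0 := by
      have h := hx (qs (q x))
        (Submodule.mem_sup_right (Submodule.mem_sup_right
          (LinearMap.mem_range_self qs (q x))))
      rw [hqs'] at h
      exact inner_self_eq_zero.mp h
    have hqpsx : qs (ps x) = 0 := by
      have h := hx ((p ∘ₗ q) (qs (ps x)))
        (Submodule.mem_sup_left (LinearMap.mem_range_self (p ∘ₗ q) _))
      rw [LinearMap.comp_apply, hps, hqs] at h
      exact inner_self_eq_zero.mp h
    exact LinearMap.mem_ker.mpr ((hker x).mpr ⟨hpx, hqx, hqpsx⟩)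
  -- orthogonality statements
  have O1 : ∀ a ∈ LinearMap.ker (deltaBC p q ps qs),
      ∀ b ∈ LinearMap.range (p ∘ₗ q), (inner ℂ a b : ℂ) = 0 := by
    rintro a ha b ⟨y, rfl⟩
    obtain ⟨h1, h2, h3⟩ := (hker a).mp (LinearMap.mem_ker.mp ha)
    rw [← inner_conj_symm a ((p ∘ₗ q) y), LinearMap.comp_apply, hps, hqs, h3,
      inner_zero_right, map_zero]
  have O2 : ∀ a ∈ LinearMap.ker (deltaBC p q ps qs),
      ∀ c ∈ LinearMap.range ps ⊔ LinearMap.range qs, (inner ℂ a c : ℂ) = 0 := by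
    rintro a ha c hc
    obtain ⟨h1, h2, h3⟩ := (hker a).mp (LinearMap.mem_ker.mp ha)
    obtain ⟨c1, ⟨u, rfl⟩, c2, ⟨v, rfl⟩, rfl⟩ := Submodule.mem_sup.mp hc
    rw [inner_add_right, ← hps, ← hqs, h1, h2, inner_zero_left, inner_zero_left,
      add_zero]
  have O3 : ∀ b ∈ LinearMap.range (p ∘ₗ q),
      ∀ c ∈ LinearMap.range ps ⊔ LinearMap.range qs, (inner ℂ b c : ℂ) = 0 := by
    rintro b ⟨y, rfl⟩ c hc
    obtain ⟨c1, ⟨u, rfl⟩, c2, ⟨v, rfl⟩, rfl⟩ := Submodule.mem_sup.mp hc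
    rw [inner_add_right, ← hps, ← hqs, LinearMap.comp_apply, hpp0, hqp, hqq0,
      map_zero, neg_zero, inner_zero_left, inner_zero_left, add_zero]
  -- splitting
  have hsplit : ∀ v : H, ∃ a ∈ LinearMap.ker (deltaBC p q ps qs),
      ∃ b ∈ LinearMap.range (p ∘ₗ q),
        ∃ c ∈ LinearMap.range ps ⊔ LinearMap.range qs, v = a + b + c := by
    intro v
    have htop : W ⊔ Wᗮ = ⊤ := Submodule.sup_orthogonal_of_hasOrthogonalProjection
    have hv : v ∈ W ⊔ Wᗮ := htop ▸ Submodule.mem_top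
    obtain ⟨w, hw, a, ha, rfl⟩ := Submodule.mem_sup.mp hv
    obtain ⟨b, hb, c, hc, rfl⟩ := Submodule.mem_sup.mp hw
    exact ⟨a, hWperpK a ha, b, hb, c, hc, by abel⟩
  refine ⟨hsplit, O1, O2, O3, ?_⟩
  -- the isomorphism
  have hKle : LinearMap.ker (deltaBC p q ps qs) ≤
      LinearMap.ker p ⊓ LinearMap.ker q := by
    intro x hx
    obtain ⟨h1, h2, _⟩ := (hker x).mp (LinearMap.mem_ker.mp hx)
    exact Submodule.mem_inf.mpr ⟨LinearMap.mem_ker.mpr h1, LinearMap.mem_ker.mpr h2⟩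
  set Kpq := LinearMap.ker p ⊓ LinearMap.ker q with hKpq
  set N := Submodule.comap Kpq.subtype (LinearMap.range (p ∘ₗ q)) with hN
  set f : (LinearMap.ker (deltaBC p q ps qs) : Submodule ℂ H) →ₗ[ℂ] Kpq ⧸ N :=
    N.mkQ ∘ₗ Submodule.inclusion hKle with hf
  have hinj : Function.Injective f := by
    rw [injective_iff_map_eq_zero]
    intro a ha
    rw [hf, LinearMap.comp_apply, Submodule.mkQ_apply,
      Submodule.Quotient.mk_eq_zero] at ha
    have hmem : (a : H) ∈ LinearMap.range (p ∘ₗ q) := ha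
    have := O1 (a : H) a.2 (a : H) hmem
    have h0 : (a : H) = 0 := inner_self_eq_zero.mp this
    exact Subtype.ext h0
  have hsurj : Function.Surjective f := by
    intro z
    obtain ⟨⟨x, hx⟩, rfl⟩ := N.mkQ_surjective z
    obtain ⟨a, ha, b, hb, c, hc, hdec⟩ := hsplit x
    -- b ∈ Kpq
    obtain ⟨y, rfl⟩ := hb
    have hbK : (p ∘ₗ q) y ∈ Kpq := by
      refine Submodule.mem_inf.mpr ⟨LinearMap.mem_ker.mpr ?_, LinearMap.mem_ker.mpr ?_⟩
      · simpa using hpp0 (q y)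
      · simp only [LinearMap.comp_apply]
        rw [hqp, hqq0, map_zero, neg_zero]
    have haK : a ∈ Kpq := hKle ha
    -- c ∈ Kpq
    have hcK : c ∈ Kpq := by
      have : c = x - a - (p ∘ₗ q) y := by rw [hdec]; abel
      rw [this]
      exact Submodule.sub_mem _ (Submodule.sub_mem _ hx haK) hbK
    -- c = 0
    have hc0 : c = 0 := by
      obtain ⟨hcp, hcq⟩ := Submodule.mem_inf.mp hcK
      obtain ⟨c1, ⟨u, rfl⟩, c2, ⟨v, rfl⟩, rfl⟩ := Submodule.mem_sup.mp hc
      have : (inner ℂ (ps u + qs v) (ps u + qs v) : ℂ) = 0 := by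
        rw [inner_add_right, ← hps, ← hqs, LinearMap.mem_ker.mp hcp,
          LinearMap.mem_ker.mp hcq, inner_zero_left, inner_zero_left, add_zero]
      exact inner_self_eq_zero.mp this
    rw [hc0, add_zero] at hdec
    refine ⟨⟨a, ha⟩, ?_⟩
    rw [hf, LinearMap.comp_apply, Submodule.mkQ_apply]
    have : Submodule.inclusion hKle ⟨a, ha⟩ = (⟨a, haK⟩ : Kpq) := rfl
    rw [this, Submodule.mkQ_apply, Submodule.Quotient.eq]
    have hsub : ((⟨a, haK⟩ : Kpq) - ⟨x, hx⟩ : Kpq) = (⟨a - x, Submodule.sub_mem _ haK hx⟩ : Kpq) := rfl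
    rw [hsub]
    show a - x ∈ LinearMap.range (p ∘ₗ q)
    rw [hdec]
    refine ⟨-y, ?_⟩
    simp only [map_neg]
    abel
  exact ⟨LinearEquiv.ofBijective f ⟨hinj, hsurj⟩⟩
end

section
/- Let H be a finite-dimensional complex inner product space with anticommuting square-zero operators ∂, ∂̄ and adjoints ∂*, ∂̄*, and suppose ⋆ : H → H is a unitary (or anti-unitary conjugate-linear) isomorphism satisfying ∂* = −⋆ ∂̄ ⋆⁻¹ and ∂̄* = −⋆ ∂ ⋆⁻¹. Then ⋆ maps ker Δ_BC bijectively onto ker Δ_A, inducing an isomorphism between Bott-Chern cohomology (ker ∂ ∩ ker ∂̄)/im ∂∂̄ and Aeppli cohomology (ker ∂∂̄)/(im ∂ + im ∂̄). -/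
/-- The Aeppli Laplacian. -/
def deltaA {H : Type*} [AddCommGroup H] [Module ℂ H]
    (p q ps qs : H →ₗ[ℂ] H) : H →ₗ[ℂ] H :=
  p ∘ₗ ps + q ∘ₗ qs + (qs ∘ₗ ps) ∘ₗ (p ∘ₗ q) + (p ∘ₗ q) ∘ₗ (qs ∘ₗ ps)
    + (p ∘ₗ qs) ∘ₗ (q ∘ₗ ps) + (q ∘ₗ ps) ∘ₗ (p ∘ₗ qs)

/-- If `g` is "the adjoint" of `f` in the weak sense, then `ker f = (range g)ᗮ`. -/
lemma aux_ker {H : Type*} [NormedAddCommGroup H] [InnerProductSpace ℂ H]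
    (f g : H →ₗ[ℂ] H) (h : ∀ x y : H, (inner ℂ (f x) y : ℂ) = inner ℂ x (g y)) :
    LinearMap.ker f = (LinearMap.range g)ᗮ := by
  ext x
  simp only [LinearMap.mem_ker, Submodule.mem_orthogonal]
  constructor
  · rintro hx u hu
    obtain ⟨y, rfl⟩ := hu
    have h0 : (inner ℂ x (g y) : ℂ) = 0 := by rw [← h x y, hx, inner_zero_left]
    rw [← inner_conj_symm, h0, map_zero]
  · intro hx
    have h1 : (inner ℂ (f x) (f x) : ℂ) = 0 := by
      rw [h x (f x), ← inner_conj_symm, hx (g (f x)) ⟨f x, rfl⟩, map_zero]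
    exact inner_self_eq_zero.mp h1

/-- If `fs` is the adjoint of `f`, `gs` the adjoint of `g`, and `gs = -(⋆ f ⋆⁻¹)`,
then `⋆ fs ⋆⁻¹ = -g`. -/
lemma aux_conj {H : Type*} [NormedAddCommGroup H] [InnerProductSpace ℂ H]
    (f fs g gs : H →ₗ[ℂ] H) (st : H ≃ₗ[ℂ] H)
    (hunit : ∀ x y : H, (inner ℂ (st x) (st y) : ℂ) = inner ℂ x y)
    (hf : ∀ x y : H, (inner ℂ (f x) y : ℂ) = inner ℂ x (fs y))
    (hg : ∀ x y : H, (inner ℂ (g x) y : ℂ) = inner ℂ x (gs y))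
    (hgs : gs = -((st : H →ₗ[ℂ] H) ∘ₗ f ∘ₗ (st.symm : H →ₗ[ℂ] H))) :
    (st : H →ₗ[ℂ] H) ∘ₗ fs ∘ₗ (st.symm : H →ₗ[ℂ] H) = -g := by
  have hsymm : ∀ u v : H, (inner ℂ (st.symm u) (st.symm v) : ℂ) = inner ℂ u v := by
    intro u v
    have h := hunit (st.symm u) (st.symm v)
    simp at h
    exact h.symm
  have hfT : ∀ x : H, f (st.symm x) = -(st.symm (gs x)) := by
    intro x
    rw [hgs]
    simp
  ext y
  apply ext_inner_left ℂ
  intro x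
  have step1 : (inner ℂ x (st (fs (st.symm y))) : ℂ)
      = inner ℂ (st.symm x) (fs (st.symm y)) := by
    have h := hunit (st.symm x) (fs (st.symm y))
    simpa using h
  have step2 : (inner ℂ (st.symm x) (fs (st.symm y)) : ℂ)
      = inner ℂ (f (st.symm x)) (st.symm y) := (hf _ _).symm
  have step3 : (inner ℂ (f (st.symm x)) (st.symm y) : ℂ) = -(inner ℂ (gs x) y) := by
    rw [hfT, inner_neg_left, hsymm]
  have step4 : (inner ℂ (gs x) y : ℂ) = inner ℂ x (g y) := by
    rw [← inner_conj_symm, ← hg y x, inner_conj_symm]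
  simp only [LinearMap.comp_apply, LinearMap.coe_comp, Function.comp_apply,
    LinearEquiv.coe_coe, LinearMap.neg_apply]
  rw [step1, step2, step3, step4, inner_neg_right]

/-- A unitary isomorphism `⋆` with `∂* = -⋆ ∂̄ ⋆⁻¹` and `∂̄* = -⋆ ∂ ⋆⁻¹` maps
`ker Δ_BC` bijectively onto `ker Δ_A`, inducing an isomorphism between Bott-Chern
cohomology `(ker ∂ ∩ ker ∂̄)/im ∂∂̄` and Aeppli cohomology `(ker ∂∂̄)/(im ∂ + im ∂̄)`. -/
theorem stmt12 {H : Type*} [NormedAddCommGroup H] [InnerProductSpace ℂ H]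
    [FiniteDimensional ℂ H]
    (p q ps qs : H →ₗ[ℂ] H)
    (hp : p ∘ₗ p = 0) (hq : q ∘ₗ q = 0) (hpq : p ∘ₗ q + q ∘ₗ p = 0)
    (hps : ∀ x y : H, (inner ℂ (p x) y : ℂ) = inner ℂ x (ps y))
    (hqs : ∀ x y : H, (inner ℂ (q x) y : ℂ) = inner ℂ x (qs y))
    (st : H ≃ₗ[ℂ] H)
    (hunit : ∀ x y : H, (inner ℂ (st x) (st y) : ℂ) = inner ℂ x y)
    (hst1 : ps = -((st : H →ₗ[ℂ] H) ∘ₗ q ∘ₗ (st.symm : H →ₗ[ℂ] H)))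
    (hst2 : qs = -((st : H →ₗ[ℂ] H) ∘ₗ p ∘ₗ (st.symm : H →ₗ[ℂ] H))) :
    Submodule.map (st : H →ₗ[ℂ] H) (LinearMap.ker (deltaBC p q ps qs))
      = LinearMap.ker (deltaA p q ps qs) ∧
    Nonempty (((LinearMap.ker p ⊓ LinearMap.ker q : Submodule ℂ H) ⧸
        Submodule.comap (LinearMap.ker p ⊓ LinearMap.ker q).subtype
          (LinearMap.range (p ∘ₗ q))) ≃ₗ[ℂ]
      ((LinearMap.ker (p ∘ₗ q) : Submodule ℂ H) ⧸
        Submodule.comap (LinearMap.ker (p ∘ₗ q)).subtype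
          (LinearMap.range p ⊔ LinearMap.range q))) := by
  set S : H →ₗ[ℂ] H := (st : H →ₗ[ℂ] H) with hS
  set T : H →ₗ[ℂ] H := (st.symm : H →ₗ[ℂ] H) with hT
  have conj_comp : ∀ A B : H →ₗ[ℂ] H,
      S ∘ₗ (A ∘ₗ B) ∘ₗ T = (S ∘ₗ A ∘ₗ T) ∘ₗ (S ∘ₗ B ∘ₗ T) := by
    intro A B
    ext x
    simp [hS, hT]
  have hP : S ∘ₗ p ∘ₗ T = -qs := by rw [hst2, neg_neg]
  have hQ : S ∘ₗ q ∘ₗ T = -ps := by rw [hst1, neg_neg]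
  have h3 : S ∘ₗ ps ∘ₗ T = -q := aux_conj p ps q qs st hunit hps hqs hst2
  have h4 : S ∘ₗ qs ∘ₗ T = -p := aux_conj q qs p ps st hunit hqs hps hst1
  have key : deltaA p q ps qs = S ∘ₗ deltaBC p q ps qs ∘ₗ T := by
    unfold deltaBC deltaA
    simp only [LinearMap.comp_add, LinearMap.add_comp]
    simp only [conj_comp, hP, hQ, h3, h4]
    simp only [LinearMap.neg_comp, LinearMap.comp_neg, neg_neg]
    abel
  constructor
  · ext x
    simp only [Submodule.mem_map, LinearMap.mem_ker]
    constructor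
    · rintro ⟨y, hy, rfl⟩
      rw [key]
      simp only [LinearMap.comp_apply, hS, hT, LinearEquiv.coe_coe,
        LinearEquiv.symm_apply_apply]
      rw [hy, map_zero]
    · intro hx
      refine ⟨st.symm x, ?_, by simp [hS]⟩
      rw [key] at hx
      simp only [LinearMap.comp_apply, hS, hT, LinearEquiv.coe_coe] at hx
      have := st.injective (by simpa using hx : st (deltaBC p q ps qs (st.symm x)) = st 0)
      simpa using this
  · -- pointwise versions of the relations
    have hp' : ∀ x : H, p (p x) = 0 := fun x => by
      have := LinearMap.ext_iff.mp hp x; simpa using this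
    have hq' : ∀ x : H, q (q x) = 0 := fun x => by
      have := LinearMap.ext_iff.mp hq x; simpa using this
    have hpq' : ∀ x : H, p (q x) = -(q (p x)) := fun x => by
      have := LinearMap.ext_iff.mp hpq x
      simp only [LinearMap.add_apply, LinearMap.comp_apply, LinearMap.zero_apply] at this
      exact eq_neg_of_add_eq_zero_left this
    -- orthogonality descriptions of the kernels
    have hker1 : LinearMap.ker p = (LinearMap.range ps)ᗮ := aux_ker p ps hps
    have hker2 : LinearMap.ker q = (LinearMap.range qs)ᗮ := aux_ker q qs hqs
    have hpqadj : ∀ x y : H, (inner ℂ ((p ∘ₗ q) x) y : ℂ) = inner ℂ x ((qs ∘ₗ ps) y) := by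
      intro x y
      simp only [LinearMap.comp_apply]
      rw [hps, hqs]
    have hker3 : LinearMap.ker (p ∘ₗ q) = (LinearMap.range (qs ∘ₗ ps))ᗮ :=
      aux_ker _ _ hpqadj
    have hK1 : LinearMap.ker p ⊓ LinearMap.ker q
        = (LinearMap.range ps ⊔ LinearMap.range qs)ᗮ := by
      rw [hker1, hker2, Submodule.inf_orthogonal]
    -- ranges of the adjoints via st
    have hrange : ∀ f : H →ₗ[ℂ] H,
        LinearMap.range (S ∘ₗ f ∘ₗ T) = Submodule.map S (LinearMap.range f) := by
      intro f
      rw [LinearMap.range_comp, LinearMap.range_comp_of_range_eq_top]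
      rw [hT]
      exact LinearEquiv.range st.symm
    have hrps : LinearMap.range ps = Submodule.map S (LinearMap.range q) := by
      rw [hst1, LinearMap.range_neg, hrange]
    have hrqs : LinearMap.range qs = Submodule.map S (LinearMap.range p) := by
      rw [hst2, LinearMap.range_neg, hrange]
    have hr2 : LinearMap.range ps ⊔ LinearMap.range qs
        = Submodule.map S (LinearMap.range p ⊔ LinearMap.range q) := by
      rw [hrps, hrqs, ← Submodule.map_sup, sup_comm]
    have hr1 : LinearMap.range (qs ∘ₗ ps) = Submodule.map S (LinearMap.range (p ∘ₗ q)) := by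
      have hc : S ∘ₗ (p ∘ₗ q) ∘ₗ T = qs ∘ₗ ps := by
        rw [conj_comp, hP, hQ]
        simp
      rw [← hc, hrange]
    have hfr : ∀ X : Submodule ℂ H,
        Module.finrank ℂ (Submodule.map S X) = Module.finrank ℂ X := by
      intro X
      rw [hS]
      exact LinearEquiv.finrank_map_eq st X
    -- dimension identities
    have e1 : Module.finrank ℂ ↥(LinearMap.range p ⊔ LinearMap.range q)
        + Module.finrank ℂ ↥(LinearMap.ker p ⊓ LinearMap.ker q)
        = Module.finrank ℂ H := by
      have h := Submodule.finrank_add_finrank_orthogonal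
        (LinearMap.range ps ⊔ LinearMap.range qs)
      rw [← hK1, hr2, hfr] at h
      exact h
    have e2 : Module.finrank ℂ ↥(LinearMap.range (p ∘ₗ q))
        + Module.finrank ℂ ↥(LinearMap.ker (p ∘ₗ q))
        = Module.finrank ℂ H := by
      have h := Submodule.finrank_add_finrank_orthogonal (LinearMap.range (qs ∘ₗ ps))
      rw [← hker3, hr1, hfr] at h
      exact h
    -- the submodule inclusions
    have hle1 : LinearMap.range (p ∘ₗ q) ≤ LinearMap.ker p ⊓ LinearMap.ker q := by
      rintro x ⟨y, rfl⟩
      simp only [Submodule.mem_inf, LinearMap.mem_ker, LinearMap.comp_apply]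
      exact ⟨hp' (q y), by rw [hpq' y]; simp [hq']⟩
    have hle2 : LinearMap.range p ⊔ LinearMap.range q ≤ LinearMap.ker (p ∘ₗ q) := by
      apply sup_le
      · rintro x ⟨y, rfl⟩
        simp only [LinearMap.mem_ker, LinearMap.comp_apply]
        rw [hpq' (p y), hp' y]
        simp
      · rintro x ⟨y, rfl⟩
        simp only [LinearMap.mem_ker, LinearMap.comp_apply]
        rw [hq' y]
        simp
    have hcq1 : Module.finrank ℂ
        ↥(Submodule.comap (LinearMap.ker p ⊓ LinearMap.ker q).subtype
          (LinearMap.range (p ∘ₗ q)))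
        = Module.finrank ℂ ↥(LinearMap.range (p ∘ₗ q)) :=
      LinearEquiv.finrank_eq (Submodule.comapSubtypeEquivOfLe hle1)
    have hcq2 : Module.finrank ℂ
        ↥(Submodule.comap (LinearMap.ker (p ∘ₗ q)).subtype
          (LinearMap.range p ⊔ LinearMap.range q))
        = Module.finrank ℂ ↥(LinearMap.range p ⊔ LinearMap.range q) :=
      LinearEquiv.finrank_eq (Submodule.comapSubtypeEquivOfLe hle2)
    have f1 := Submodule.finrank_quotient_add_finrank
      (Submodule.comap (LinearMap.ker p ⊓ LinearMap.ker q).subtype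
        (LinearMap.range (p ∘ₗ q)))
    have f2 := Submodule.finrank_quotient_add_finrank
      (Submodule.comap (LinearMap.ker (p ∘ₗ q)).subtype
        (LinearMap.range p ⊔ LinearMap.range q))
    rw [hcq1] at f1
    rw [hcq2] at f2
    exact ⟨LinearEquiv.ofFinrankEq _ _ (by omega)⟩
end
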